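/- Let Q be a parabolic quasi-quadric in PG(4,q), q even, with nucleus N, and let H be the set of hyperplanes meeting Q in exactly (q+1)^2 points. Then every point of Q lies in exactly (q^3+q^2)/2 hyperplanes of H, every point other than N and not in Q lies in exactly q^3/2 hyperplanes of H, and N lies in no hyperplane of H. -/

import Mathlib

open Submodule Set

/-- Points of `PG(4,q)`: one-dimensional subspaces of `F^5`. -/
abbrev PGPoint (F : Type*) [Field F] := {W : Submodule F (Fin 5 → F) // Module.finrank F W = 1}
/-- Lines of `PG(4,q)`: two-dimensional subspaces of `F^5`. -/
abbrev PGLine (F : Type*) [Field F] := {W : Submodule F (Fin 5 → F) // Module.finrank F W = 2}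
/-- Planes of `PG(4,q)`: three-dimensional subspaces of `F^5`. -/
abbrev PGPlane (F : Type*) [Field F] := {W : Submodule F (Fin 5 → F) // Module.finrank F W = 3}
/-- Solids (hyperplanes) of `PG(4,q)`: four-dimensional subspaces of `F^5`. -/
abbrev PGSolid (F : Type*) [Field F] := {W : Submodule F (Fin 5 → F) // Module.finrank F W = 4}

variable {F : Type*} [Field F]

/-- The solids of `H` through the point `P`. -/
def solidsThrough (H : Set (PGSolid F)) (P : PGPoint F) : Set (PGSolid F) :=
  {S ∈ H | P.1 ≤ S.1}

/-- Hypothesis (I): every point lies on `0`, `q^3/2` or `(q^3+q^2)/2` solids of `H`. -/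
def CondI (q : ℕ) (H : Set (PGSolid F)) : Prop :=
  ∀ P : PGPoint F,
    (solidsThrough H P).ncard = 0 ∨
    2 * (solidsThrough H P).ncard = q ^ 3 ∨
    2 * (solidsThrough H P).ncard = q ^ 3 + q ^ 2

/-- A red point: lies on no solid of `H`. -/
def Red (H : Set (PGSolid F)) (P : PGPoint F) : Prop := (solidsThrough H P).ncard = 0

/-- A white point: lies on `q^3/2` solids of `H`. -/
def White (q : ℕ) (H : Set (PGSolid F)) (P : PGPoint F) : Prop :=
  2 * (solidsThrough H P).ncard = q ^ 3

/-- A black point: lies on `(q^3+q^2)/2` solids of `H`. -/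
def Black (q : ℕ) (H : Set (PGSolid F)) (P : PGPoint F) : Prop :=
  2 * (solidsThrough H P).ncard = q ^ 3 + q ^ 2

/-- The black points contained in a subspace `W`. -/
def blackIn (q : ℕ) (H : Set (PGSolid F)) (W : Submodule F (Fin 5 → F)) : Set (PGPoint F) :=
  {P : PGPoint F | Black q H P ∧ P.1 ≤ W}

/-- The points of the set `Q` lying in the subspace `W`. -/
def pointsIn (Q : Set (PGPoint F)) (W : Submodule F (Fin 5 → F)) : Set (PGPoint F) :=
  {P ∈ Q | P.1 ≤ W}

/-- A parabolic quasi-quadric in `PG(4,q)`, `q` even, with nucleus `N`: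
a set of `q^3+q^2+q+1` points such that every line through `N` contains exactly one
point of the set, and every hyperplane not through `N` meets it in `q^2+1` or `(q+1)^2`
points. -/
def IsQuasiQuadric (q : ℕ) (Q : Set (PGPoint F)) (N : PGPoint F) : Prop :=
  Q.ncard = q ^ 3 + q ^ 2 + q + 1 ∧
  (∀ ℓ : PGLine F, N.1 ≤ ℓ.1 → (pointsIn Q ℓ.1).ncard = 1) ∧
  (∀ S : PGSolid F, ¬ N.1 ≤ S.1 →
    (pointsIn Q S.1).ncard = q ^ 2 + 1 ∨ (pointsIn Q S.1).ncard = (q + 1) ^ 2)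

/-- The point set of the quadric defined by the quadratic form `φ`. -/
def quadricSet (φ : QuadraticForm F (Fin 5 → F)) : Set (PGPoint F) :=
  {P : PGPoint F | ∀ v ∈ P.1, φ v = 0}

/-- A quadratic form is non-singular if no nonzero singular vector lies in the radical
of its polar form. -/
def Nonsingular (φ : QuadraticForm F (Fin 5 → F)) : Prop :=
  ∀ v : Fin 5 → F, (∀ w, QuadraticMap.polar (⇑φ) v w = 0) → φ v = 0 → v = 0

/-- `N` is a nucleus of the point set `Q`: every line through `N` meets `Q` in exactly
one point. -/
def IsNucleus (Q : Set (PGPoint F)) (N : PGPoint F) : Prop :=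
  ∀ ℓ : PGLine F, N.1 ≤ ℓ.1 → (pointsIn Q ℓ.1).ncard = 1

/-! ### Auxiliary lemmas -/

section QQAux

set_option linter.unusedSectionVars false

-- arithmetic identities
theorem qq_id1 {q : ℕ} (hq2 : 2 ≤ q) : (q-1) * (q^3+q^2+q+1) = q^4 - 1 := by
  obtain ⟨m, rfl⟩ := Nat.exists_eq_add_of_le hq2
  simp only [show 2+m-1 = m+1 from by omega]
  symm; apply Nat.sub_eq_of_eq_add; ring
theorem qq_id2 {q : ℕ} (hq2 : 2 ≤ q) : (q-1) * (q^2+q+1) = q^3 - 1 := by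
  obtain ⟨m, rfl⟩ := Nat.exists_eq_add_of_le hq2
  simp only [show 2+m-1 = m+1 from by omega]
  symm; apply Nat.sub_eq_of_eq_add; ring
theorem qq_id3 {q : ℕ} (hq2 : 2 ≤ q) : (q-1) * (q+1) = q^2 - 1 := by
  obtain ⟨m, rfl⟩ := Nat.exists_eq_add_of_le hq2
  simp only [show 2+m-1 = m+1 from by omega]
  symm; apply Nat.sub_eq_of_eq_add; ring
theorem qq_id4 {q : ℕ} (hq2 : 2 ≤ q) : (q^2-q) * (q^2+q+1) = q^4 - q := by
  obtain ⟨m, rfl⟩ := Nat.exists_eq_add_of_le hq2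
  have e : (2+m)^2 - (2+m) = (2+m)*(m+1) := by apply Nat.sub_eq_of_eq_add; ring
  rw [e]; symm; apply Nat.sub_eq_of_eq_add; ring

variable {K : Type*} [Field K] [Fintype K]

instance : Finite (Submodule K (Fin 5 → K)) :=
  Finite.of_injective (fun W => (W : Set (Fin 5 → K))) SetLike.coe_injective

instance : Finite (Module.Dual K (Fin 5 → K)) :=
  Finite.of_injective (fun φ => (φ : (Fin 5 → K) → K)) DFunLike.coe_injective

theorem qq_finrank_top : Module.finrank K (Fin 5 → K) = 5 := by simp [Module.finrank_pi]

theorem qq_card_submodule (W : Submodule K (Fin 5 → K)) :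
    Nat.card W = Fintype.card K ^ (Module.finrank K W) := by
  have : Fintype W := Fintype.ofFinite W
  rw [Nat.card_eq_fintype_card]; exact Module.card_eq_pow_finrank

theorem qq_ncard_coe (W : Submodule K (Fin 5 → K)) :
    (W : Set (Fin 5 → K)).ncard = Fintype.card K ^ (Module.finrank K W) := by
  rw [← Nat.card_coe_set_eq]; exact qq_card_submodule W

theorem qq_finrank_ann (W : Submodule K (Fin 5 → K)) :
    Module.finrank K W.dualAnnihilator = 5 - Module.finrank K W := by
  have h1 : Module.finrank K ((Fin 5 → K) ⧸ W) = Module.finrank K W.dualAnnihilator :=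
    LinearEquiv.finrank_eq (Subspace.quotEquivAnnihilator W)
  have h2 := Submodule.finrank_quotient_add_finrank W
  have h3 := qq_finrank_top (K := K)
  have h4 := Submodule.finrank_le W
  omega

theorem qq_fiber_count {α β : Type*} [Finite α] [Finite β] (s : Set α) (t : Set β)
    (f : α → β) (hmem : ∀ a ∈ s, f a ∈ t) (k : ℕ)
    (hfib : ∀ b ∈ t, {a ∈ s | f a = b}.ncard = k) :
    s.ncard = k * t.ncard := by
  classical
  have : Fintype α := Fintype.ofFinite α
  have : Fintype β := Fintype.ofFinite β
  rw [Set.ncard_eq_toFinset_card' s, Set.ncard_eq_toFinset_card' t]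
  rw [Finset.card_eq_sum_card_fiberwise (f := f) (t := t.toFinset)
    (fun a ha => Set.mem_toFinset.2 (hmem a (Set.mem_toFinset.1 ha)))]
  rw [Finset.sum_congr rfl (fun b hb => ?_), Finset.sum_const, smul_eq_mul, mul_comm]
  have := hfib b (Set.mem_toFinset.1 hb)
  rw [← this, Set.ncard_eq_toFinset_card']
  congr 1
  ext a
  simp [Set.mem_toFinset]

theorem qq_finrank_ker {φ : Module.Dual K (Fin 5 → K)} (hφ : φ ≠ 0) :
    Module.finrank K (LinearMap.ker φ) = 4 := by
  have hr := LinearMap.finrank_range_add_finrank_ker φ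
  rw [qq_finrank_top] at hr
  have hrange : LinearMap.range φ = ⊤ := by
    rcases eq_bot_or_eq_top (LinearMap.range φ) with h | h
    · exact absurd (LinearMap.range_eq_bot.1 h) hφ
    · exact h
  rw [hrange, finrank_top] at hr
  have : Module.finrank K K = 1 := Module.finrank_self K
  omega

theorem qq_ncard_ann_ne_zero (W : Submodule K (Fin 5 → K)) :
    {φ : Module.Dual K (Fin 5 → K) | φ ∈ W.dualAnnihilator ∧ φ ≠ 0}.ncard
      = Fintype.card K ^ (5 - Module.finrank K W) - 1 := by
  have hset : {φ : Module.Dual K (Fin 5 → K) | φ ∈ W.dualAnnihilator ∧ φ ≠ 0}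
      = (W.dualAnnihilator : Set (Module.Dual K (Fin 5 → K))) \ {0} := by
    ext φ; simp [and_comm]
  rw [hset, Set.ncard_diff_singleton_of_mem (Submodule.zero_mem _)]
  rw [← Nat.card_coe_set_eq]
  have hcard : Nat.card W.dualAnnihilator
      = Fintype.card K ^ (Module.finrank K W.dualAnnihilator) := by
    have : Fintype W.dualAnnihilator := Fintype.ofFinite _
    rw [Nat.card_eq_fintype_card]; exact Module.card_eq_pow_finrank (K := K) (V := W.dualAnnihilator)
  rw [show (Nat.card ((W.dualAnnihilator : Set (Module.Dual K (Fin 5 → K)))))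
      = Nat.card W.dualAnnihilator from rfl, hcard, qq_finrank_ann]

/-- The key counting lemma: number of solids containing a given subspace. -/
theorem qq_solids_count (W : Submodule K (Fin 5 → K)) :
    (Fintype.card K - 1) * {S : PGSolid K | W ≤ S.1}.ncard
      = Fintype.card K ^ (5 - Module.finrank K W) - 1 := by
  classical
  set q := Fintype.card K
  have himg : Subtype.val '' {S : PGSolid K | W ≤ S.1}
      = {U : Submodule K (Fin 5 → K) | Module.finrank K U = 4 ∧ W ≤ U} := by
    ext U
    constructor
    · rintro ⟨S, hS, rfl⟩; exact ⟨S.2, hS⟩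
    · rintro ⟨h4, hW⟩; exact ⟨⟨U, h4⟩, hW, rfl⟩
  have hcardeq : {S : PGSolid K | W ≤ S.1}.ncard
      = {U : Submodule K (Fin 5 → K) | Module.finrank K U = 4 ∧ W ≤ U}.ncard := by
    rw [← himg, Set.ncard_image_of_injective _ Subtype.val_injective]
  rw [hcardeq]
  rw [← qq_ncard_ann_ne_zero W]
  refine (qq_fiber_count _ _ (fun φ => LinearMap.ker φ) ?_ (q - 1) ?_).symm
  · rintro φ ⟨h1, h2⟩
    exact ⟨qq_finrank_ker h2, fun w hw => (Submodule.mem_dualAnnihilator φ).1 h1 w hw⟩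
  · rintro U ⟨h4, hWU⟩
    have hU : {φ : Module.Dual K (Fin 5 → K) |
        (φ ∈ W.dualAnnihilator ∧ φ ≠ 0) ∧ LinearMap.ker φ = U}
        = {φ : Module.Dual K (Fin 5 → K) | φ ∈ U.dualAnnihilator ∧ φ ≠ 0} := by
      ext φ
      constructor
      · rintro ⟨⟨-, hne⟩, hker⟩
        refine ⟨(Submodule.mem_dualAnnihilator φ).2 (fun w hw => ?_), hne⟩
        rw [← hker] at hw; exact hw
      · rintro ⟨hann, hne⟩
        have hUker : U ≤ LinearMap.ker φ := fun w hw =>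
          LinearMap.mem_ker.2 ((Submodule.mem_dualAnnihilator φ).1 hann w hw)
        have heq : U = LinearMap.ker φ :=
          Submodule.eq_of_le_of_finrank_le hUker (by rw [qq_finrank_ker hne, h4])
        exact ⟨⟨(Submodule.mem_dualAnnihilator φ).2
          (fun w hw => (Submodule.mem_dualAnnihilator φ).1 hann w (hWU hw)), hne⟩, heq.symm⟩
    rw [show {a ∈ {φ : Module.Dual K (Fin 5 → K) | φ ∈ W.dualAnnihilator ∧ φ ≠ 0} |
        LinearMap.ker a = U} = {φ : Module.Dual K (Fin 5 → K) |
        (φ ∈ W.dualAnnihilator ∧ φ ≠ 0) ∧ LinearMap.ker φ = U} from rfl, hU,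
      qq_ncard_ann_ne_zero U, h4]
    norm_num
    rfl

theorem qq_solids_over_point (hq2 : 2 ≤ Fintype.card K) {W : Submodule K (Fin 5 → K)}
    (h1 : Module.finrank K W = 1) :
    {S : PGSolid K | W ≤ S.1}.ncard
      = Fintype.card K^3 + Fintype.card K^2 + Fintype.card K + 1 := by
  have key := qq_solids_count (K := K) W
  rw [h1] at key
  norm_num at key
  exact Nat.eq_of_mul_eq_mul_left (by omega) (key.trans (qq_id1 hq2).symm)

theorem qq_solids_over_line (hq2 : 2 ≤ Fintype.card K) {W : Submodule K (Fin 5 → K)}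
    (h2 : Module.finrank K W = 2) :
    {S : PGSolid K | W ≤ S.1}.ncard = Fintype.card K^2 + Fintype.card K + 1 := by
  have key := qq_solids_count (K := K) W
  rw [h2] at key
  norm_num at key
  exact Nat.eq_of_mul_eq_mul_left (by omega) (key.trans (qq_id2 hq2).symm)

theorem qq_solids_over_plane (hq2 : 2 ≤ Fintype.card K) {W : Submodule K (Fin 5 → K)}
    (h3 : Module.finrank K W = 3) :
    {S : PGSolid K | W ≤ S.1}.ncard = Fintype.card K + 1 := by
  have key := qq_solids_count (K := K) W
  rw [h3] at key
  norm_num at key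
  exact Nat.eq_of_mul_eq_mul_left (by omega) (key.trans (qq_id3 hq2).symm)

theorem qq_finrank_sup {W P : Submodule K (Fin 5 → K)}
    (hP : Module.finrank K P = 1) (hnle : ¬ P ≤ W) :
    Module.finrank K ↥(W ⊔ P) = Module.finrank K W + 1 := by
  have hsup := Submodule.finrank_sup_add_finrank_inf_eq W P
  have hle : Module.finrank K ↥(W ⊓ P) ≤ 1 := by
    rw [← hP]; exact Submodule.finrank_mono inf_le_right
  rcases Nat.lt_or_ge (Module.finrank K ↥(W ⊓ P)) 1 with h | h
  · omega
  · exfalso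
    have heq : W ⊓ P = P := Submodule.eq_of_le_of_finrank_le inf_le_right (by omega)
    exact hnle (heq ▸ inf_le_left)

theorem qq_point_eq {P P' : PGPoint K} (h : P.1 ≤ P'.1) : P = P' :=
  Subtype.ext (Submodule.eq_of_le_of_finrank_le h (by rw [P.2, P'.2]))

theorem qq_line_of_vec (N : PGPoint K) {v : Fin 5 → K} (hv : v ∉ N.1) :
    Module.finrank K ↥(N.1 ⊔ (Submodule.span K {v})) = 2 := by
  have h1 : Module.finrank K (Submodule.span K {v}) = 1 := by
    apply finrank_span_singleton
    rintro rfl; exact hv (Submodule.zero_mem _)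
  have hnle : ¬ (Submodule.span K {v}) ≤ N.1 := fun h =>
    hv (h (Submodule.mem_span_singleton_self v))
  rw [qq_finrank_sup h1 hnle, N.2]

/-- Number of lines through a point `N` inside a solid `S`. -/
theorem qq_lines_in_solid (hq2 : 2 ≤ Fintype.card K) (N : PGPoint K) (S : PGSolid K)
    (hNS : N.1 ≤ S.1) :
    {U : Submodule K (Fin 5 → K) | Module.finrank K U = 2 ∧ N.1 ≤ U ∧ U ≤ S.1}.ncard
      = Fintype.card K^2 + Fintype.card K + 1 := by
  set q := Fintype.card K
  have hcount : ((S.1 : Set (Fin 5 → K)) \ (N.1 : Set (Fin 5 → K))).ncard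
      = (q^2 - q) * {U : Submodule K (Fin 5 → K) |
          Module.finrank K U = 2 ∧ N.1 ≤ U ∧ U ≤ S.1}.ncard := by
    apply qq_fiber_count _ _ (fun v => N.1 ⊔ (Submodule.span K {v}))
    · rintro v ⟨hvS, hvN⟩
      exact ⟨qq_line_of_vec N hvN, le_sup_left,
        sup_le hNS ((Submodule.span_singleton_le_iff_mem v S.1).2 hvS)⟩
    · rintro U ⟨hU2, hNU, hUS⟩
      have hfib : {v ∈ (S.1 : Set (Fin 5 → K)) \ (N.1 : Set (Fin 5 → K)) |
          N.1 ⊔ (Submodule.span K {v}) = U}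
          = (U : Set (Fin 5 → K)) \ (N.1 : Set (Fin 5 → K)) := by
        ext v
        constructor
        · rintro ⟨⟨hvS, hvN⟩, hfv⟩
          exact ⟨hfv ▸ (le_sup_right : Submodule.span K {v} ≤ N.1 ⊔ Submodule.span K {v}) (Submodule.mem_span_singleton_self v), hvN⟩
        · rintro ⟨hvU, hvN⟩
          refine ⟨⟨hUS hvU, hvN⟩, ?_⟩
          apply Submodule.eq_of_le_of_finrank_le
            (sup_le hNU ((Submodule.span_singleton_le_iff_mem v U).2 hvU))
          rw [hU2, qq_line_of_vec N hvN]
      rw [hfib, Set.ncard_diff (SetLike.coe_subset_coe.2 hNU) (Set.toFinite _),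
        qq_ncard_coe, qq_ncard_coe, hU2, N.2, pow_one]
  rw [Set.ncard_diff (SetLike.coe_subset_coe.2 hNS) (Set.toFinite _),
    qq_ncard_coe, qq_ncard_coe, S.2, N.2, pow_one] at hcount
  have hqlt : q < q ^ 2 := by nlinarith
  have hpos : 0 < q^2 - q := by omega
  apply Nat.eq_of_mul_eq_mul_left hpos
  rw [← hcount, qq_id4 hq2]

/-- Double counting of an incidence relation. -/
theorem qq_double_count {α β : Type*} [Finite α] [Finite β] (A : Set α) (B : Set β)
    (r : α → β → Prop) :
    ∑ a ∈ A.toFinite.toFinset, {b ∈ B | r a b}.ncard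
      = ∑ b ∈ B.toFinite.toFinset, {a ∈ A | r a b}.ncard := by
  classical
  have e1 : ∀ a : α, {b ∈ B | r a b}.ncard
      = ∑ b ∈ B.toFinite.toFinset, if r a b then 1 else 0 := by
    intro a
    rw [Set.ncard_eq_toFinset_card _ (Set.toFinite _), ← Finset.card_filter]
    congr 1
    ext b
    simp [Set.Finite.mem_toFinset]
  have e2 : ∀ b : β, {a ∈ A | r a b}.ncard
      = ∑ a ∈ A.toFinite.toFinset, if r a b then 1 else 0 := by
    intro b
    rw [Set.ncard_eq_toFinset_card _ (Set.toFinite _), ← Finset.card_filter]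
    congr 1
    ext a
    simp [Set.Finite.mem_toFinset]
  simp only [e1, e2]
  exact Finset.sum_comm

end QQAux
section QQAux2
set_option linter.unusedSectionVars false
set_option maxHeartbeats 1000000

variable {K : Type*} [Field K] [Fintype K]

theorem qq_N_notin_Q (hq2 : 2 ≤ Fintype.card K) {Q : Set (PGPoint K)} {N : PGPoint K}
    (hQcard : Q.ncard = Fintype.card K^3 + Fintype.card K^2 + Fintype.card K + 1)
    (hnuc : ∀ ℓ : PGLine K, N.1 ≤ ℓ.1 → (pointsIn Q ℓ.1).ncard = 1) : N ∉ Q := by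
  intro hN
  have h1 : 1 < Q.ncard := by
    rw [hQcard]
    have : 1 ≤ Fintype.card K^3 := Nat.one_le_pow _ _ (by omega)
    omega
  obtain ⟨P', hP'Q, hne⟩ := Set.exists_ne_of_one_lt_ncard h1 N
  have hnle : ¬ P'.1 ≤ N.1 := fun h => hne (qq_point_eq h)
  have hL2 : Module.finrank K ↥(N.1 ⊔ P'.1) = 2 := by
    rw [qq_finrank_sup P'.2 hnle, N.2]
  have h1' := hnuc ⟨N.1 ⊔ P'.1, hL2⟩ le_sup_left
  obtain ⟨a, ha⟩ := Set.ncard_eq_one.1 h1'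
  have hNa : N ∈ pointsIn Q (N.1 ⊔ P'.1) := ⟨hN, le_sup_left⟩
  have hP'a : P' ∈ pointsIn Q (N.1 ⊔ P'.1) := ⟨hP'Q, le_sup_right⟩
  rw [ha] at hNa hP'a
  exact hne (by rw [Set.mem_singleton_iff.1 hP'a, Set.mem_singleton_iff.1 hNa])

theorem qq_solid_through_N (hq2 : 2 ≤ Fintype.card K) {Q : Set (PGPoint K)} {N : PGPoint K}
    (hNQ : N ∉ Q)
    (hnuc : ∀ ℓ : PGLine K, N.1 ≤ ℓ.1 → (pointsIn Q ℓ.1).ncard = 1)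
    (S : PGSolid K) (hNS : N.1 ≤ S.1) :
    (pointsIn Q S.1).ncard = Fintype.card K^2 + Fintype.card K + 1 := by
  set g : PGPoint K → Submodule K (Fin 5 → K) := fun P' => N.1 ⊔ P'.1 with hg
  have hdim : ∀ P' ∈ Q, Module.finrank K ↥(g P') = 2 := by
    intro P' hP'
    have hnle : ¬ P'.1 ≤ N.1 := fun h => hNQ (by rwa [qq_point_eq h] at hP')
    rw [hg]
    rw [qq_finrank_sup P'.2 hnle, N.2]
  have hmaps : ∀ P' ∈ pointsIn Q S.1, g P' ∈
      {U : Submodule K (Fin 5 → K) | Module.finrank K U = 2 ∧ N.1 ≤ U ∧ U ≤ S.1} := by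
    rintro P' ⟨hP'Q, hP'S⟩
    exact ⟨hdim P' hP'Q, le_sup_left, sup_le hNS hP'S⟩
  have huniq : ∀ (U : Submodule K (Fin 5 → K)), Module.finrank K U = 2 → N.1 ≤ U →
      ∀ P1 P2 : PGPoint K, P1 ∈ pointsIn Q U → P2 ∈ pointsIn Q U → P1 = P2 := by
    intro U h2 hNU P1 P2 h1 h2'
    obtain ⟨a, ha⟩ := Set.ncard_eq_one.1 (hnuc ⟨U, h2⟩ hNU)
    rw [ha] at h1 h2'
    rw [Set.mem_singleton_iff.1 h1, Set.mem_singleton_iff.1 h2']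
  have hinj : Set.InjOn g (pointsIn Q S.1) := by
    rintro P1 h1 P2 h2 heq
    refine huniq (g P1) (hdim P1 h1.1) le_sup_left P1 P2 ⟨h1.1, le_sup_right⟩
      ⟨h2.1, ?_⟩
    rw [heq]; exact le_sup_right
  have hsurj : Set.SurjOn g (pointsIn Q S.1)
      {U : Submodule K (Fin 5 → K) | Module.finrank K U = 2 ∧ N.1 ≤ U ∧ U ≤ S.1} := by
    rintro U ⟨h2, hNU, hUS⟩
    obtain ⟨a, ha⟩ := Set.ncard_eq_one.1 (hnuc ⟨U, h2⟩ hNU)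
    have haU : a ∈ pointsIn Q U := by rw [ha]; exact rfl
    obtain ⟨haQ, haleU⟩ := haU
    refine ⟨a, ⟨haQ, le_trans haleU hUS⟩, ?_⟩
    apply Submodule.eq_of_le_of_finrank_le (sup_le hNU haleU)
    rw [h2, hdim a haQ]
  have hbij : Set.BijOn g (pointsIn Q S.1)
      {U : Submodule K (Fin 5 → K) | Module.finrank K U = 2 ∧ N.1 ≤ U ∧ U ≤ S.1} :=
    ⟨fun P' h => hmaps P' h, hinj, hsurj⟩
  rw [← qq_lines_in_solid hq2 N S hNS, ← hbij.image_eq, Set.ncard_image_of_injOn hinj]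

end QQAux2
set_option maxHeartbeats 1600000 in
theorem stmt11 (q : ℕ) (hq : ∃ n : ℕ, 0 < n ∧ q = 2 ^ n)
    (F : Type*) [Field F] [Fintype F] (hcard : Fintype.card F = q)
    (Q : Set (PGPoint F)) (N : PGPoint F) (hQ : IsQuasiQuadric q Q N)
    (H : Set (PGSolid F))
    (hH : H = {S : PGSolid F | (pointsIn Q S.1).ncard = (q + 1) ^ 2}) :
    (∀ P ∈ Q, 2 * (solidsThrough H P).ncard = q ^ 3 + q ^ 2) ∧
    (∀ P : PGPoint F, P ∉ Q → P ≠ N → 2 * (solidsThrough H P).ncard = q ^ 3) ∧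
    (solidsThrough H N).ncard = 0 := by
  classical
  obtain ⟨hQcard, hnuc, hsolid⟩ := hQ
  have hq2 : 2 ≤ q := by
    obtain ⟨n, hn, rfl⟩ := hq
    calc 2 = 2^1 := (pow_one 2).symm
    _ ≤ 2^n := Nat.pow_le_pow_right (by omega) hn
  have hcard2 : 2 ≤ Fintype.card F := by rw [hcard]; exact hq2
  have hmemH : ∀ S : PGSolid F, S ∈ H ↔ (pointsIn Q S.1).ncard = (q+1)^2 := by
    intro S; rw [hH]; exact Iff.rfl
  have hNQ : N ∉ Q := qq_N_notin_Q hcard2 (by rw [hcard]; exact hQcard) hnuc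
  have hNS_count : ∀ S : PGSolid F, N.1 ≤ S.1 → (pointsIn Q S.1).ncard = q^2+q+1 := by
    intro S hNS
    have := qq_solid_through_N hcard2 hNQ hnuc S hNS
    rwa [hcard] at this
  have hHnotN : ∀ S : PGSolid F, S ∈ H → ¬ N.1 ≤ S.1 := by
    intro S hS hNS
    have h1 : q^2+q+1 = (q+1)^2 := (hNS_count S hNS).symm.trans ((hmemH S).1 hS)
    have h2 : (q+1)^2 = q^2+2*q+1 := by ring
    rw [h2] at h1
    have : q = 0 := by linarith
    omega
  -- key counting statement
  have key : ∀ P : PGPoint F, P ≠ N →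
      2 * ((solidsThrough H P).ncard) = (if P ∈ Q then q^3 + q^2 else q^3) := by
    intro P hPN
    have hnleNP : ¬ N.1 ≤ P.1 := fun h => hPN (qq_point_eq h).symm
    have hL2 : Module.finrank F ↥(P.1 ⊔ N.1) = 2 := by
      rw [qq_finrank_sup N.2 hnleNP, P.2]
    set L := P.1 ⊔ N.1 with hLdef
    obtain ⟨P0, hP0⟩ := Set.ncard_eq_one.1 (hnuc ⟨L, hL2⟩ le_sup_right)
    have hP0mem : P0 ∈ pointsIn Q L := by rw [hP0]; exact rfl
    obtain ⟨hP0Q, hP0L⟩ := hP0mem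
    set A := {S : PGSolid F | P.1 ≤ S.1 ∧ ¬ N.1 ≤ S.1} with hAdef
    have hsubL : {S : PGSolid F | L ≤ S.1} ⊆ {S : PGSolid F | P.1 ≤ S.1} :=
      fun S hS => le_trans (le_sup_left : P.1 ≤ L) hS
    have hAeq : A = {S : PGSolid F | P.1 ≤ S.1} \ {S : PGSolid F | L ≤ S.1} := by
      ext S
      simp only [hAdef, Set.mem_setOf_eq, Set.mem_diff]
      constructor
      · rintro ⟨h1, h2⟩
        exact ⟨h1, fun hL => h2 (le_trans (le_sup_right : N.1 ≤ P.1 ⊔ N.1) hL)⟩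
      · rintro ⟨h1, h2⟩
        exact ⟨h1, fun hN => h2 (sup_le h1 hN)⟩
    have hA3 : A.ncard = q^3 := by
      rw [hAeq, Set.ncard_diff hsubL (Set.toFinite _),
        qq_solids_over_point hcard2 P.2, qq_solids_over_line hcard2 hL2, hcard,
        show q^3+q^2+q+1 = q^3 + (q^2+q+1) from by ring, Nat.add_sub_cancel]
    -- the generic value q^2
    have hgen : ∀ P' : PGPoint F, P' ∈ Q → P' ≠ P → ¬ P'.1 ≤ L →
        {S ∈ A | P'.1 ≤ S.1}.ncard = q^2 := by
      intro P' hP'Q hP'P hP'L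
      have hnlePP' : ¬ P'.1 ≤ P.1 := fun h => hP'P (qq_point_eq h)
      have hl2 : Module.finrank F ↥(P.1 ⊔ P'.1) = 2 := by
        rw [qq_finrank_sup P'.2 hnlePP', P.2]
      have hnleN : ¬ N.1 ≤ P.1 ⊔ P'.1 := by
        intro hN
        have hLle : L ≤ P.1 ⊔ P'.1 := sup_le le_sup_left hN
        have hLeq : L = P.1 ⊔ P'.1 :=
          Submodule.eq_of_le_of_finrank_le hLle (by rw [hl2, hL2])
        exact hP'L (by rw [hLeq]; exact le_sup_right)
      have hp3 : Module.finrank F ↥((P.1 ⊔ P'.1) ⊔ N.1) = 3 := by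
        rw [qq_finrank_sup N.2 hnleN, hl2]
      have hseteq : {S ∈ A | P'.1 ≤ S.1}
          = {S : PGSolid F | P.1 ⊔ P'.1 ≤ S.1}
            \ {S : PGSolid F | (P.1 ⊔ P'.1) ⊔ N.1 ≤ S.1} := by
        ext S
        simp only [hAdef, Set.mem_setOf_eq, Set.mem_diff, Set.mem_sep_iff]
        constructor
        · rintro ⟨⟨h1, h2⟩, h3⟩
          exact ⟨sup_le h1 h3, fun h => h2 (le_trans (le_sup_right : N.1 ≤ _) h)⟩
        · rintro ⟨h1, h2⟩
          exact ⟨⟨le_trans (le_sup_left : P.1 ≤ _) h1, fun hN => h2 (sup_le h1 hN)⟩,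
            le_trans (le_sup_right : P'.1 ≤ _) h1⟩
      have hsub2 : {S : PGSolid F | (P.1 ⊔ P'.1) ⊔ N.1 ≤ S.1}
          ⊆ {S : PGSolid F | P.1 ⊔ P'.1 ≤ S.1} :=
        fun S hS => le_trans (le_sup_left : P.1 ⊔ P'.1 ≤ (P.1 ⊔ P'.1) ⊔ N.1) hS
      rw [hseteq, Set.ncard_diff hsub2 (Set.toFinite _),
        qq_solids_over_line hcard2 hl2, qq_solids_over_plane hcard2 hp3, hcard,
        show q^2+q+1 = q^2 + (q+1) from by ring, Nat.add_sub_cancel]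
    -- value at P0 when P ∉ Q
    have hP0val : P ∉ Q → {S ∈ A | P0.1 ≤ S.1}.ncard = 0 := by
      intro hPQ
      have hP0ne : ¬ P0.1 ≤ P.1 := by
        intro h
        exact hPQ (by rwa [← qq_point_eq h])
      have heqL : P.1 ⊔ P0.1 = L := by
        apply Submodule.eq_of_le_of_finrank_le (sup_le (le_sup_left : P.1 ≤ L) hP0L)
        rw [qq_finrank_sup P0.2 hP0ne, P.2, hL2]
      have hempty : {S ∈ A | P0.1 ≤ S.1} = ∅ := by
        ext S
        simp only [hAdef, Set.mem_sep_iff, Set.mem_setOf_eq, Set.mem_empty_iff_false,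
          iff_false, not_and]
        rintro ⟨h1, h2⟩ h3
        apply h2
        refine le_trans ?_ (sup_le h1 h3 : P.1 ⊔ P0.1 ≤ S.1)
        rw [heqL]
        exact le_sup_right
      rw [hempty, Set.ncard_empty]
    -- double counting
    have hdc : ∑ S ∈ A.toFinite.toFinset, (pointsIn Q S.1).ncard
        = ∑ P' ∈ Q.toFinite.toFinset, {S ∈ A | P'.1 ≤ S.1}.ncard :=
      qq_double_count A Q (fun S P' => P'.1 ≤ S.1)
    set x := (solidsThrough H P).ncard with hx
    have hsplit := Finset.sum_filter_add_sum_filter_not A.toFinite.toFinset (fun S => S ∈ H)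
      (fun S => (pointsIn Q S.1).ncard)
    have hfilterH : A.toFinite.toFinset.filter (fun S => S ∈ H) = (solidsThrough H P).toFinite.toFinset := by
      ext S
      simp only [Finset.mem_filter, Set.Finite.mem_toFinset, hAdef, Set.mem_setOf_eq,
        solidsThrough, Set.mem_sep_iff]
      constructor
      · rintro ⟨⟨h1, h2⟩, h3⟩; exact ⟨h3, h1⟩
      · rintro ⟨h1, h2⟩; exact ⟨⟨h2, hHnotN S h1⟩, h1⟩
    have hxcard : (A.toFinite.toFinset.filter (fun S => S ∈ H)).card = x := by
      rw [hfilterH, hx, Set.ncard_eq_toFinset_card _ (Set.toFinite _)]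
    set y := (A.toFinite.toFinset.filter (fun S => ¬ S ∈ H)).card with hy
    have hxy : x + y = q^3 := by
      rw [← hxcard, hy, Finset.card_filter_add_card_filter_not, ← hA3,
        Set.ncard_eq_toFinset_card _ (Set.toFinite _)]
    have hsumH : ∑ S ∈ A.toFinite.toFinset.filter (fun S => S ∈ H), (pointsIn Q S.1).ncard
        = (q+1)^2 * x := by
      rw [Finset.sum_congr rfl (fun S hS => (hmemH S).1 (Finset.mem_filter.1 hS).2),
        Finset.sum_const, smul_eq_mul, hxcard, mul_comm]
    have hsumNH : ∑ S ∈ A.toFinite.toFinset.filter (fun S => ¬ S ∈ H), (pointsIn Q S.1).ncard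
        = (q^2+1) * y := by
      rw [Finset.sum_congr rfl (fun S hS => ?_), Finset.sum_const, smul_eq_mul, mul_comm]
      obtain ⟨hSA, hSH⟩ := Finset.mem_filter.1 hS
      have hSA' : S ∈ A := (Set.Finite.mem_toFinset (Set.toFinite A)).1 hSA
      rcases hsolid S hSA'.2 with h | h
      · exact h
      · exact absurd ((hmemH S).2 h) hSH
    -- right-hand side
    have hP0F : P0 ∈ Q.toFinite.toFinset := (Set.Finite.mem_toFinset (Set.toFinite Q)).2 hP0Q
    have herase := Finset.add_sum_erase Q.toFinite.toFinset (fun P' => {S ∈ A | P'.1 ≤ S.1}.ncard) hP0F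
    have hother : ∀ P' ∈ Q.toFinite.toFinset.erase P0, {S ∈ A | P'.1 ≤ S.1}.ncard = q^2 := by
      intro P' hP'
      obtain ⟨hne, hP'F⟩ := Finset.mem_erase.1 hP'
      have hP'Q : P' ∈ Q := (Set.Finite.mem_toFinset (Set.toFinite Q)).1 hP'F
      have hP'L : ¬ P'.1 ≤ L := by
        intro h
        have : P' ∈ pointsIn Q L := ⟨hP'Q, h⟩
        rw [hP0] at this
        exact hne (Set.mem_singleton_iff.1 this)
      have hP'P : P' ≠ P := by
        intro h
        have hPQ : P ∈ Q := h ▸ hP'Q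
        have : P ∈ pointsIn Q L := ⟨hPQ, le_sup_left⟩
        rw [hP0] at this
        exact hne (h.trans (Set.mem_singleton_iff.1 this))
      exact hgen P' hP'Q hP'P hP'L
    have hQFcard : Q.toFinite.toFinset.card = q^3+q^2+q+1 := by
      rw [← Set.ncard_eq_toFinset_card _ (Set.toFinite _), hQcard]
    have hsum_erase : ∑ P' ∈ Q.toFinite.toFinset.erase P0, {S ∈ A | P'.1 ≤ S.1}.ncard
        = (q^3+q^2+q) * q^2 := by
      rw [Finset.sum_congr rfl hother, Finset.sum_const, smul_eq_mul,
        Finset.card_erase_of_mem hP0F, hQFcard, Nat.add_sub_cancel]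
    have hmain : (q+1)^2 * x + (q^2+1) * y
        = {S ∈ A | P0.1 ≤ S.1}.ncard + (q^3+q^2+q) * q^2 := by
      rw [← hsumH, ← hsumNH, hsplit, hdc, ← herase, hsum_erase]
    have hqz : (q:ℤ) ≠ 0 := by exact_mod_cast (by omega : q ≠ 0)
    by_cases hPQ : P ∈ Q
    · rw [if_pos hPQ]
      have hPP0 : P0 = P := by
        have : P ∈ pointsIn Q L := ⟨hPQ, le_sup_left⟩
        rw [hP0] at this
        exact (Set.mem_singleton_iff.1 this).symm
      have hcP0 : {S ∈ A | P0.1 ≤ S.1}.ncard = q^3 := by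
        rw [hPP0]
        rw [show {S ∈ A | P.1 ≤ S.1} = A from by
          ext S
          simp only [hAdef, Set.mem_sep_iff, Set.mem_setOf_eq]
          exact ⟨fun h => h.1, fun h => ⟨h, h.1⟩⟩]
        exact hA3
      rw [hcP0] at hmain
      have hZ1 : ((q:ℤ)+1)^2 * x + ((q:ℤ)^2+1) * y = (q:ℤ)^3 + ((q:ℤ)^3+q^2+q) * q^2 := by
        exact_mod_cast hmain
      have hZ2 : (x:ℤ) + y = (q:ℤ)^3 := by exact_mod_cast hxy
      have hZ3 : (q:ℤ) * (2 * x) = (q:ℤ) * (q^3 + q^2) := by linear_combination hZ1 - ((q:ℤ)^2+1) * hZ2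
      have := mul_left_cancel₀ hqz hZ3
      exact_mod_cast this
    · rw [if_neg hPQ]
      rw [hP0val hPQ] at hmain
      have hZ1 : ((q:ℤ)+1)^2 * x + ((q:ℤ)^2+1) * y = 0 + ((q:ℤ)^3+q^2+q) * q^2 := by
        exact_mod_cast hmain
      have hZ2 : (x:ℤ) + y = (q:ℤ)^3 := by exact_mod_cast hxy
      have hZ3 : (q:ℤ) * (2 * x) = (q:ℤ) * (q^3) := by linear_combination hZ1 - ((q:ℤ)^2+1) * hZ2
      have := mul_left_cancel₀ hqz hZ3
      exact_mod_cast this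
  refine ⟨?_, ?_, ?_⟩
  · intro P hPQ
    have hPN : P ≠ N := fun h => hNQ (h ▸ hPQ)
    have hk := key P hPN
    rwa [if_pos hPQ] at hk
  · intro P hPQ hPN
    have hk := key P hPN
    rwa [if_neg hPQ] at hk
  · have : solidsThrough H N = ∅ := by
      ext S
      simp only [solidsThrough, Set.mem_sep_iff, Set.mem_empty_iff_false, iff_false, not_and]
      exact fun hS => hHnotN S hS
    rw [this, Set.ncard_empty]
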